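/- Let K be a field of characteristic different from 2 and let D ∈ K[X] be a nonzero polynomial of even degree whose leading coefficient is a square in K. Then ι D is a square in the field K((T)) of formal Laurent series, i.e. there exists δ ∈ K((T)) with δ² = ι D. -/

import Mathlib

open Polynomial

/-- The ring homomorphism `K[X] → K((T))` sending `X` to `T⁻¹`. -/
noncomputable def iota {K : Type*} [Field K] : Polynomial K →+* LaurentSeries K :=
  Polynomial.eval₂RingHom (HahnSeries.C : K →+* LaurentSeries K)
    (HahnSeries.single (-1 : ℤ) (1 : K))

noncomputable def sqrtAux {K : Type*} [Field K] (f : PowerSeries K) : ℕ → K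
  | 0 => 1
  | n + 1 => (PowerSeries.coeff (n + 1) f -
      ∑ i ∈ (Finset.Ioo 0 (n + 1)).attach, sqrtAux f i * sqrtAux f (n + 1 - i.val)) / 2
  decreasing_by
  · exact (Finset.mem_Ioo.mp i.2).2
  · have h := Finset.mem_Ioo.mp i.2
    omega

theorem sqrtAux_sq {K : Type*} [Field K] (h2 : (2 : K) ≠ 0) (f : PowerSeries K)
    (hf : PowerSeries.constantCoeff f = 1) :
    (PowerSeries.mk (sqrtAux f)) ^ 2 = f := by
  ext n
  rw [pow_two, PowerSeries.coeff_mul]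
  rw [Finset.Nat.sum_antidiagonal_eq_sum_range_succ (fun i j => PowerSeries.coeff i (PowerSeries.mk (sqrtAux f)) * PowerSeries.coeff j (PowerSeries.mk (sqrtAux f)))]
  simp only [PowerSeries.coeff_mk]
  cases n with
  | zero => simp [sqrtAux, hf]
  | succ m =>
    have key : ∑ i ∈ Finset.range m, sqrtAux f (i + 1) * sqrtAux f (m + 1 - (i + 1)) =
        ∑ i ∈ Finset.Ioo 0 (m + 1), sqrtAux f i * sqrtAux f (m + 1 - i) := by
      apply Finset.sum_nbij' (fun i => i + 1) (fun j => j - 1)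
      · intro a ha; simp at ha ⊢; omega
      · intro a ha; simp at ha ⊢; omega
      · intro a ha; omega
      · intro a ha; simp at ha; omega
      · intro a ha; rfl
    rw [Finset.sum_range_succ, Finset.sum_range_succ', key]
    have hS : sqrtAux f (m + 1) = (PowerSeries.coeff (m + 1) f -
        ∑ i ∈ Finset.Ioo 0 (m + 1), sqrtAux f i * sqrtAux f (m + 1 - i)) / 2 := by
      rw [sqrtAux, Finset.sum_attach (Finset.Ioo 0 (m + 1)) (fun i => sqrtAux f i * sqrtAux f (m + 1 - i))]
    have h0 : sqrtAux f 0 = 1 := by rw [sqrtAux]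
    rw [h0]
    simp only [Nat.sub_zero, Nat.sub_self, mul_one, one_mul]
    rw [hS]
    field_simp
    rw [h0]
    ring

theorem iota_eq_single_mul {K : Type*} [Field K] (D : Polynomial K) :
    iota D = HahnSeries.single (-(D.natDegree : ℤ)) (1 : K) *
      HahnSeries.ofPowerSeries ℤ K (D.reverse : PowerSeries K) := by
  set n := D.natDegree with hn
  have hrev : D.reverse = ∑ j ∈ Finset.range (n + 1), Polynomial.monomial j (D.reverse.coeff j) :=
    Polynomial.as_sum_range' D.reverse (n + 1) (Nat.lt_succ_of_le D.reverse_natDegree_le)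
  have hR : (HahnSeries.ofPowerSeries ℤ K) (D.reverse : PowerSeries K) =
      ∑ j ∈ Finset.range (n + 1), HahnSeries.single (j : ℤ) (D.reverse.coeff j) := by
    have hc : (D.reverse : PowerSeries K) = Polynomial.coeToPowerSeries.ringHom D.reverse := rfl
    conv_lhs => rw [hc, hrev]
    rw [map_sum, map_sum]
    refine Finset.sum_congr rfl fun j _ => ?_
    rw [← Polynomial.C_mul_X_pow_eq_monomial, map_mul, map_pow, map_mul, map_pow,
      Polynomial.coeToPowerSeries.ringHom_apply, Polynomial.coeToPowerSeries.ringHom_apply,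
      Polynomial.coe_C, Polynomial.coe_X, HahnSeries.ofPowerSeries_C, HahnSeries.ofPowerSeries_X,
      HahnSeries.single_pow]
    show HahnSeries.single (0 : ℤ) _ * _ = _
    rw [HahnSeries.single_mul_single]
    simp
  rw [hR, Finset.mul_sum]
  show Polynomial.eval₂ _ _ D = _
  rw [Polynomial.eval₂_eq_sum_range]
  refine Finset.sum_nbij' (fun i => n - i) (fun j => n - j) ?_ ?_ ?_ ?_ ?_
  · intro a ha; simp at ha ⊢
  · intro a ha; simp at ha ⊢; omega
  · intro a ha; simp only [Finset.mem_range] at ha; omega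
  · intro a ha; simp only [Finset.mem_range] at ha; omega
  · intro i hi
    simp only [Finset.mem_range] at hi
    have hi' : i ≤ n := Nat.lt_succ_iff.mp hi
    have h1 : D.reverse.coeff (n - i) = D.coeff i := by
      rw [Polynomial.coeff_reverse, ← hn, Polynomial.revAt_le (Nat.sub_le n i)]
      congr 1; omega
    rw [h1, HahnSeries.single_pow, HahnSeries.single_mul_single]
    show HahnSeries.single (0 : ℤ) _ * _ = _
    rw [HahnSeries.single_mul_single]
    rw [zero_add, one_pow, mul_one, one_mul]
    congr 1
    · push_cast [Nat.cast_sub hi']; ring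


/-- A nonzero polynomial of even degree with square leading coefficient becomes a square
in the Laurent series field `K((T))` (with `X ↦ T⁻¹`). -/
theorem sqrt_exists_in_laurentSeries {K : Type*} [Field K] (h2 : (2 : K) ≠ 0)
    (D : Polynomial K) (hD0 : D ≠ 0) (hdeg : Even D.natDegree)
    (hlc : ∃ c : K, D.leadingCoeff = c ^ 2) :
    ∃ δ : LaurentSeries K, δ ^ 2 = iota D := by
  obtain ⟨c, hc⟩ := hlc
  have hc0 : c ≠ 0 := by
    intro h
    apply hD0
    rw [← Polynomial.leadingCoeff_eq_zero, hc, h]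
    ring
  obtain ⟨m, hm⟩ := hdeg
  set f : PowerSeries K := (D.reverse : PowerSeries K) with hf
  set u : PowerSeries K := PowerSeries.C (c⁻¹ ^ 2) * f with hudef
  have hf0 : PowerSeries.constantCoeff f = c ^ 2 := by
    rw [hf, Polynomial.constantCoeff_coe, Polynomial.coeff_zero_reverse, hc]
  have hu : PowerSeries.constantCoeff u = 1 := by
    rw [hudef, map_mul, PowerSeries.constantCoeff_C, hf0]
    field_simp
  have hs : (PowerSeries.mk (sqrtAux u)) ^ 2 = u := sqrtAux_sq h2 u hu
  refine ⟨HahnSeries.single (-(m : ℤ)) c * HahnSeries.ofPowerSeries ℤ K (PowerSeries.mk (sqrtAux u)), ?_⟩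
  rw [mul_pow, HahnSeries.single_pow, ← map_pow, hs, iota_eq_single_mul D, hudef, map_mul,
    HahnSeries.ofPowerSeries_C,
    show (HahnSeries.C (c⁻¹ ^ 2) : LaurentSeries K) = HahnSeries.single (0 : ℤ) (c⁻¹ ^ 2) from rfl,
    ← mul_assoc, HahnSeries.single_mul_single]
  have hcc : c ^ 2 * c⁻¹ ^ 2 = 1 := by field_simp
  rw [hcc, add_zero, hm]
  congr 1
  push_cast
  ring
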